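/- Let m ≥ 1, let K ∈ ℝ^{2m×2m} be symmetric positive definite, let K¹, K² ∈ ℝ^{m×m} be symmetric matrices, and let (ρ_n) be a monotone sequence of positive reals diverging to ∞. For α = (α¹; α²) ∈ ℝ^{2m} with α¹, α² ∈ ℝ^m, define v_n(α) = Kᵀ [ (K¹/ρ_n + I_m) α¹ ; (K²/ρ_n + I_m) α² ] ∈ ℝ^{2m} and φ_n(α) = v_n(α)ᵀ (KᵀK/ρ_n + K)⁻¹ K (KᵀK/ρ_n + K)⁻¹ v_n(α) (the matrix KᵀK/ρ_n + K is invertible). Then for every α ∈ ℝ^{2m}, φ_n(α) → αᵀKα as n → ∞, the convergence is uniform on every compact subset of ℝ^{2m}, and consequently for every nonempty compact set E ⊆ ℝ^{2m}, lim_{n→∞} sup_{α ∈ E} φ_n(α) = sup_{α ∈ E} αᵀKα. -/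

import Mathlib

open Matrix Filter

/-- The function `φ_n(α)` from the proof of Proposition 7, in coordinates:
the squared fusion-space norm of the output of the fusion-center learning operator
applied to uploaded functions with coefficients `α = (α¹; α²)`. -/
noncomputable def phiFusion (m : ℕ) (K : Matrix (Fin m ⊕ Fin m) (Fin m ⊕ Fin m) ℝ)
    (K1 K2 : Matrix (Fin m) (Fin m) ℝ) (r : ℝ) (α : Fin m ⊕ Fin m → ℝ) : ℝ :=
  let v : Fin m ⊕ Fin m → ℝ :=
    Kᵀ *ᵥ Sum.elim (r⁻¹ • (K1 *ᵥ (α ∘ Sum.inl)) + α ∘ Sum.inl)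
      (r⁻¹ • (K2 *ᵥ (α ∘ Sum.inr)) + α ∘ Sum.inr)
  v ⬝ᵥ ((r⁻¹ • (Kᵀ * K) + K)⁻¹ *ᵥ (K *ᵥ ((r⁻¹ • (Kᵀ * K) + K)⁻¹ *ᵥ v)))

namespace StmtFourAux

variable {m : ℕ}

/-- The matrix of the quadratic form `φ` as a function of `t = r⁻¹`. -/
noncomputable def Amat (K : Matrix (Fin m ⊕ Fin m) (Fin m ⊕ Fin m) ℝ)
    (K1 K2 : Matrix (Fin m) (Fin m) ℝ) (t : ℝ) :
    Matrix (Fin m ⊕ Fin m) (Fin m ⊕ Fin m) ℝ :=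
  (Kᵀ * (t • (Matrix.fromBlocks K1 0 0 K2) + 1))ᵀ *
    ((t • (Kᵀ * K) + K)⁻¹ *
      (K * ((t • (Kᵀ * K) + K)⁻¹ * (Kᵀ * (t • (Matrix.fromBlocks K1 0 0 K2) + 1)))))

lemma phiFusion_eq (K : Matrix (Fin m ⊕ Fin m) (Fin m ⊕ Fin m) ℝ)
    (K1 K2 : Matrix (Fin m) (Fin m) ℝ) (r : ℝ) (α : Fin m ⊕ Fin m → ℝ) :
    phiFusion m K K1 K2 r α = α ⬝ᵥ (Amat K K1 K2 r⁻¹ *ᵥ α) := by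
  set t := r⁻¹
  have hvec : Sum.elim (t • (K1 *ᵥ (α ∘ Sum.inl)) + α ∘ Sum.inl)
      (t • (K2 *ᵥ (α ∘ Sum.inr)) + α ∘ Sum.inr)
      = (t • (Matrix.fromBlocks K1 0 0 K2) + 1) *ᵥ α := by
    ext (i | i) <;>
      simp [Matrix.add_mulVec, Matrix.smul_mulVec, Matrix.one_mulVec,
        Matrix.fromBlocks_mulVec]
  have hdot : ∀ (B : Matrix (Fin m ⊕ Fin m) (Fin m ⊕ Fin m) ℝ)
      (w : Fin m ⊕ Fin m → ℝ), (B *ᵥ α) ⬝ᵥ w = α ⬝ᵥ (Bᵀ *ᵥ w) := by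
    intro B w
    rw [dotProduct_comm, Matrix.dotProduct_mulVec, dotProduct_comm,
      Matrix.mulVec_transpose]
  simp only [phiFusion, show r⁻¹ = t from rfl, hvec, Matrix.mulVec_mulVec]
  rw [hdot]
  simp only [Amat, Matrix.mulVec_mulVec, Matrix.mul_assoc]

lemma Amat_zero (K : Matrix (Fin m ⊕ Fin m) (Fin m ⊕ Fin m) ℝ) (hK : K.PosDef)
    (K1 K2 : Matrix (Fin m) (Fin m) ℝ) : Amat K K1 K2 0 = K := by
  have hKT : Kᵀ = K := by
    have := hK.isHermitian
    simpa [Matrix.conjTranspose_eq_transpose_of_trivial, Matrix.IsHermitian] using this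
  have hdet : IsUnit K.det := (ne_of_gt hK.det_pos).isUnit
  simp only [Amat, zero_smul, zero_add, add_zero, mul_one, hKT,
    Matrix.transpose_transpose]
  rw [← Matrix.mul_assoc K K⁻¹, Matrix.mul_nonsing_inv _ hdet, Matrix.one_mul,
    ← Matrix.mul_assoc K K⁻¹, Matrix.mul_nonsing_inv _ hdet, Matrix.one_mul]

lemma Amat_continuousAt (K : Matrix (Fin m ⊕ Fin m) (Fin m ⊕ Fin m) ℝ) (hK : K.PosDef)
    (K1 K2 : Matrix (Fin m) (Fin m) ℝ) :
    ContinuousAt (Amat K K1 K2) 0 := by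
  have hdet : IsUnit K.det := (ne_of_gt hK.det_pos).isUnit
  have hM : Continuous fun t : ℝ => t • (Kᵀ * K) + K :=
    (continuous_id.smul continuous_const).add continuous_const
  have hC : ContinuousAt (fun t : ℝ => (t • (Kᵀ * K) + K)⁻¹) 0 := by
    have h0 : (0 : ℝ) • (Kᵀ * K) + K = K := by simp
    have hinv : ContinuousAt Inv.inv ((fun t : ℝ => t • (Kᵀ * K) + K) 0) := by
      refine continuousAt_matrix_inv _ ?_
      show ContinuousAt Ring.inverse ((0 : ℝ) • (Kᵀ * K) + K).det
      rw [h0]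
      exact NormedRing.inverse_continuousAt hdet.unit
    have hcomp : ContinuousAt (Inv.inv ∘ fun t : ℝ => t • (Kᵀ * K) + K) 0 :=
      ContinuousAt.comp (g := Inv.inv) (f := fun t : ℝ => t • (Kᵀ * K) + K) (x := (0 : ℝ))
        hinv hM.continuousAt
    exact hcomp
  have hD : Continuous fun t : ℝ =>
      Kᵀ * (t • (Matrix.fromBlocks K1 0 0 K2) + 1) :=
    continuous_const.matrix_mul ((continuous_id.smul continuous_const).add continuous_const)
  exact (hD.matrix_transpose.continuousAt).mul
    (hC.mul (continuousAt_const.mul (hC.mul hD.continuousAt)))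

lemma quad_bound (M : Matrix (Fin m ⊕ Fin m) (Fin m ⊕ Fin m) ℝ)
    (α : Fin m ⊕ Fin m → ℝ) (R : ℝ) (hR : ∀ i, |α i| ≤ R) (hR0 : 0 ≤ R) :
    |α ⬝ᵥ (M *ᵥ α)| ≤ (∑ i, ∑ j, |M i j|) * R ^ 2 := by
  have hform : α ⬝ᵥ (M *ᵥ α) = ∑ i, α i * ∑ j, M i j * α j := by
    simp only [dotProduct, Matrix.mulVec]
  rw [hform]
  calc |∑ i, α i * ∑ j, M i j * α j| ≤ ∑ i, |α i * ∑ j, M i j * α j| :=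
        Finset.abs_sum_le_sum_abs _ _
    _ ≤ ∑ i, ∑ j, |M i j| * R ^ 2 := by
        refine Finset.sum_le_sum fun i _ => ?_
        rw [abs_mul]
        have h1 : |∑ j, M i j * α j| ≤ ∑ j, |M i j| * R := by
          refine le_trans (Finset.abs_sum_le_sum_abs _ _)
            (Finset.sum_le_sum fun j _ => ?_)
          rw [abs_mul]
          exact mul_le_mul_of_nonneg_left (hR j) (abs_nonneg _)
        calc |α i| * |∑ j, M i j * α j| ≤ R * ∑ j, |M i j| * R :=
              mul_le_mul (hR i) h1 (abs_nonneg _) hR0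
          _ = ∑ j, |M i j| * R ^ 2 := by
              rw [Finset.mul_sum]
              exact Finset.sum_congr rfl fun j _ => by ring
    _ = (∑ i, ∑ j, |M i j|) * R ^ 2 := by simp_rw [Finset.sum_mul]

end StmtFourAux

open StmtFourAux in
/-- (Core convergence claim of Proposition 7.) `φ_n → αᵀKα` pointwise,
uniformly on compacts, and the suprema over any nonempty compact set converge. -/
theorem stmt_4 (m : ℕ) (hm : 1 ≤ m)
    (K : Matrix (Fin m ⊕ Fin m) (Fin m ⊕ Fin m) ℝ) (hK : K.PosDef)
    (K1 K2 : Matrix (Fin m) (Fin m) ℝ) (hK1 : K1.IsSymm) (hK2 : K2.IsSymm)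
    (ρ : ℕ → ℝ) (hρpos : ∀ n, 0 < ρ n) (hmono : Monotone ρ)
    (hρ : Tendsto ρ atTop atTop) :
    (∀ n, IsUnit ((ρ n)⁻¹ • (Kᵀ * K) + K)) ∧
    (∀ α : Fin m ⊕ Fin m → ℝ,
      Tendsto (fun n => phiFusion m K K1 K2 (ρ n) α) atTop (nhds (α ⬝ᵥ K *ᵥ α))) ∧
    (∀ E : Set (Fin m ⊕ Fin m → ℝ), IsCompact E →
      TendstoUniformlyOn (fun n α => phiFusion m K K1 K2 (ρ n) α)
        (fun α => α ⬝ᵥ K *ᵥ α) atTop E) ∧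
    (∀ E : Set (Fin m ⊕ Fin m → ℝ), IsCompact E → E.Nonempty →
      Tendsto (fun n => sSup ((fun α => phiFusion m K K1 K2 (ρ n) α) '' E)) atTop
        (nhds (sSup ((fun α => α ⬝ᵥ K *ᵥ α) '' E)))) := by
  -- Part 1 : invertibility
  have hunit : ∀ n, IsUnit ((ρ n)⁻¹ • (Kᵀ * K) + K) := by
    intro n
    have hsemi : ((ρ n)⁻¹ • (Kᵀ * K)).PosSemidef := by
      have hKK : (Kᵀ * K).PosSemidef := by
        have := Matrix.posSemidef_conjTranspose_mul_self K
        simpa [Matrix.conjTranspose_eq_transpose_of_trivial] using this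
      refine ⟨?_, fun x => ?_⟩
      · have := hKK.isHermitian
        simpa [Matrix.IsHermitian] using congrArg (fun M => (ρ n)⁻¹ • M) this
      · have := hKK.2 x
        have h1 : (0:ℝ) ≤ (ρ n)⁻¹ := le_of_lt (inv_pos.2 (hρpos n))
        exact (hKK.smul h1).2 x
    have hpd : ((ρ n)⁻¹ • (Kᵀ * K) + K).PosDef := Matrix.PosDef.posSemidef_add hsemi hK
    exact (Matrix.isUnit_iff_isUnit_det _).2 (ne_of_gt hpd.det_pos).isUnit
  refine ⟨hunit, ?_⟩
  -- convergence of the matrices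
  have htinv : Tendsto (fun n => (ρ n)⁻¹) atTop (nhds 0) :=
    tendsto_inv_atTop_zero.comp hρ
  have hAtend : Tendsto (fun n => Amat K K1 K2 ((ρ n)⁻¹)) atTop (nhds K) := by
    have := (Amat_continuousAt K hK K1 K2).tendsto.comp htinv
    rwa [Amat_zero K hK K1 K2] at this
  -- entrywise error sum
  set b : ℕ → ℝ := fun n => ∑ i, ∑ j, |Amat K K1 K2 ((ρ n)⁻¹) i j - K i j| with hb_def
  have hb : Tendsto b atTop (nhds 0) := by
    have hzero : (0:ℝ) = ∑ i : Fin m ⊕ Fin m, ∑ j : Fin m ⊕ Fin m, (0:ℝ) := by simp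
    rw [hb_def, hzero]
    refine tendsto_finset_sum _ fun i _ => tendsto_finset_sum _ fun j _ => ?_
    have hentry : Tendsto (fun n => Amat K K1 K2 ((ρ n)⁻¹) i j) atTop (nhds (K i j)) := by
      have hcont : Continuous fun M : Matrix (Fin m ⊕ Fin m) (Fin m ⊕ Fin m) ℝ => M i j :=
        continuous_apply_apply i j
      exact (hcont.tendsto _).comp hAtend
    have habs : Tendsto (fun n => |Amat K K1 K2 ((ρ n)⁻¹) i j - K i j|) atTop
        (nhds |K i j - K i j|) :=
      (hentry.sub (tendsto_const_nhds (x := K i j))).abs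
    simpa using habs
  -- Part 3 : uniform convergence on compacts (proved first)
  have hUnif : ∀ E : Set (Fin m ⊕ Fin m → ℝ), IsCompact E →
      TendstoUniformlyOn (fun n α => phiFusion m K K1 K2 (ρ n) α)
        (fun α => α ⬝ᵥ K *ᵥ α) atTop E := by
    intro E hE
    obtain ⟨r, hr⟩ := hE.isBounded.subset_closedBall 0
    set R : ℝ := max r 0 with hR_def
    have hR0 : 0 ≤ R := le_max_right _ _
    have hmem : ∀ α ∈ E, ∀ i, |α i| ≤ R := by
      intro α hα i
      have : ‖α‖ ≤ r := by simpa [Metric.mem_closedBall] using hr hα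
      exact le_trans (le_trans (norm_le_pi_norm α i) this) (le_max_left _ _)
    rw [Metric.tendstoUniformlyOn_iff]
    intro ε hε
    have hlim : Tendsto (fun n => b n * R ^ 2) atTop (nhds 0) := by
      simpa only [zero_mul] using hb.mul_const (R ^ 2)
    have hev : ∀ᶠ n in atTop, b n * R ^ 2 < ε :=
      (hlim.eventually (eventually_lt_nhds hε)).mono fun n h => by simpa using h
    refine hev.mono fun n hn α hα => ?_
    have hkey : |phiFusion m K K1 K2 (ρ n) α - α ⬝ᵥ K *ᵥ α| ≤ b n * R ^ 2 := by
      rw [phiFusion_eq]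
      have hsub : α ⬝ᵥ (Amat K K1 K2 ((ρ n)⁻¹) *ᵥ α) - α ⬝ᵥ (K *ᵥ α)
          = α ⬝ᵥ ((Amat K K1 K2 ((ρ n)⁻¹) - K) *ᵥ α) := by
        rw [Matrix.sub_mulVec, dotProduct_sub]
      rw [hsub]
      have := quad_bound (Amat K K1 K2 ((ρ n)⁻¹) - K) α R (hmem α hα) hR0
      simpa [hb_def, Matrix.sub_apply] using this
    rw [Real.dist_eq, abs_sub_comm]
    exact lt_of_le_of_lt hkey hn
  -- Part 2 : pointwise convergence
  have hPt : ∀ α : Fin m ⊕ Fin m → ℝ,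
      Tendsto (fun n => phiFusion m K K1 K2 (ρ n) α) atTop (nhds (α ⬝ᵥ K *ᵥ α)) := by
    intro α
    have := hUnif {α} isCompact_singleton
    rw [tendstoUniformlyOn_singleton_iff_tendsto] at this
    exact this
  refine ⟨hPt, hUnif, ?_⟩
  -- Part 4 : convergence of suprema
  intro E hE hne
  have hgc : Continuous fun α : Fin m ⊕ Fin m → ℝ => α ⬝ᵥ K *ᵥ α :=
    continuous_id.dotProduct (continuous_const.matrix_mulVec continuous_id)
  have hgb : BddAbove ((fun α => α ⬝ᵥ K *ᵥ α) '' E) := (hE.image hgc).bddAbove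
  rw [Metric.tendsto_atTop]
  intro ε hε
  have hU := hUnif E hE
  rw [Metric.tendstoUniformlyOn_iff] at hU
  obtain ⟨N, hN⟩ := Filter.eventually_atTop.1 (hU (ε / 2) (by linarith))
  refine ⟨N, fun n hn => ?_⟩
  have hclose : ∀ α ∈ E, |phiFusion m K K1 K2 (ρ n) α - α ⬝ᵥ K *ᵥ α| < ε / 2 := by
    intro α hα
    have := hN n hn α hα
    rwa [Real.dist_eq, abs_sub_comm] at this
  set S := sSup ((fun α => α ⬝ᵥ K *ᵥ α) '' E) with hS_def
  have hfb : BddAbove ((fun α => phiFusion m K K1 K2 (ρ n) α) '' E) := by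
    refine ⟨S + ε / 2, ?_⟩
    rintro _ ⟨α, hα, rfl⟩
    have h1 := (abs_lt.1 (hclose α hα)).2
    have h2 : α ⬝ᵥ K *ᵥ α ≤ S := le_csSup hgb ⟨α, hα, rfl⟩
    linarith
  have hle1 : sSup ((fun α => phiFusion m K K1 K2 (ρ n) α) '' E) ≤ S + ε / 2 := by
    refine csSup_le (hne.image _) ?_
    rintro _ ⟨α, hα, rfl⟩
    have h1 := (abs_lt.1 (hclose α hα)).2
    have h2 : α ⬝ᵥ K *ᵥ α ≤ S := le_csSup hgb ⟨α, hα, rfl⟩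
    linarith
  have hle2 : S ≤ sSup ((fun α => phiFusion m K K1 K2 (ρ n) α) '' E) + ε / 2 := by
    rw [hS_def]
    refine csSup_le (hne.image _) ?_
    rintro _ ⟨α, hα, rfl⟩
    have h1 := (abs_lt.1 (hclose α hα)).1
    have h2 : phiFusion m K K1 K2 (ρ n) α
        ≤ sSup ((fun α => phiFusion m K K1 K2 (ρ n) α) '' E) :=
      le_csSup hfb ⟨α, hα, rfl⟩
    linarith
  rw [Real.dist_eq]
  exact abs_sub_lt_iff.2 ⟨by linarith, by linarith⟩
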